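/- Twisted periodicity of Q₀ (from Lemma 4.1 of the paper). Let ν ∈ ℂ with Re ν > 0, and let ψ : (0,∞) → V be continuous and satisfy η(T)ψ(x) = ψ(x+1) + (x+1)^{-2ν-1} η(ST⁻¹) ψ(x/(x+1)) for all x > 0. Then for every x > 0 the series Q₀(x) := x^{-2ν-1} ψ(1/x) - Σ_{n=0}^{∞} (n+x)^{-2ν-1} η(T(T')ⁿ)^{-1} ψ(1 + 1/(n+x)) converges absolutely, and Q₀(x+1) = η(T') Q₀(x) for all x > 0. -/

import Mathlib

open Complex Filter Topology MeasureTheory Set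

noncomputable section

abbrev SL2Z := Matrix.SpecialLinearGroup (Fin 2) ℤ

def Smat : SL2Z := ⟨!![0, 1; -1, 0], by decide⟩
def Tmat : SL2Z := ⟨!![1, 1; 0, 1], by decide⟩
def Tpmat : SL2Z := ⟨!![1, 0; 1, 1], by decide⟩
def negI : SL2Z := ⟨!![-1, 0; 0, -1], by decide⟩

variable {V : Type} [NormedAddCommGroup V] [NormedSpace ℂ V]

/-- The `n`-th term of the series defining `Q₀`:
`(n+x)^{-2ν-1} η(T(T')ⁿ)⁻¹ ψ(1 + 1/(n+x))`. -/
def QZeroTerm (ν : ℂ) (η : SL2Z →* (V →ₗ[ℂ] V)ˣ) (ψ : ℝ → V) (x : ℝ) (n : ℕ) : V :=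
  (((n + x : ℝ) : ℂ) ^ (-2 * ν - 1)) •
    (η (Tmat * Tpmat ^ n)⁻¹ : V →ₗ[ℂ] V) (ψ (1 + 1 / (n + x)))

/-- `Q₀(x) = x^{-2ν-1} ψ(1/x) - Σ_{n≥0} (n+x)^{-2ν-1} η(T(T')ⁿ)⁻¹ ψ(1 + 1/(n+x))`. -/
def QZero [FiniteDimensional ℂ V] (ν : ℂ) (η : SL2Z →* (V →ₗ[ℂ] V)ˣ) (ψ : ℝ → V)
    (x : ℝ) : V :=
  (((x : ℝ) : ℂ) ^ (-2 * ν - 1)) • ψ (1 / x) - ∑' n : ℕ, QZeroTerm ν η ψ x n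

/-- Auxiliary summability fact: for `s < -1` and `x > 0`, `∑ (n+x)^s` converges. -/
lemma aux_summable_rpow (s x : ℝ) (hs : s < -1) (hx : 0 < x) :
    Summable fun n : ℕ => ((n : ℝ) + x) ^ s := by
  rw [← summable_nat_add_iff 1]
  refine Summable.of_nonneg_of_le (fun n => Real.rpow_nonneg (by positivity) s)
    (fun n => ?_) ((summable_nat_add_iff 1).mpr (Real.summable_nat_rpow.mpr hs))
  have h1 : (0:ℝ) < (n:ℝ) + 1 := by positivity
  have h2 : ((n:ℝ) + 1) ≤ (n:ℝ) + 1 + x := by linarith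
  push_cast
  rw [show s = -(-s) by ring, Real.rpow_neg h1.le, Real.rpow_neg (by linarith)]
  exact inv_anti₀ (Real.rpow_pos_of_pos h1 _) (Real.rpow_le_rpow h1.le h2 (by linarith))


/-- The key matrix identity `T' T⁻¹ S T⁻¹ = 1` in `SL(2,ℤ)`. -/
lemma Tpmat_Tmat_inv_Smat_Tmat_inv : Tpmat * Tmat⁻¹ * (Smat * Tmat⁻¹) = 1 := by
  have h : Tmat⁻¹ = ⟨!![1, -1; 0, 1], by decide⟩ := by
    apply inv_eq_of_mul_eq_one_right
    ext i j
    fin_cases i <;> fin_cases j <;> rfl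
  rw [h]
  ext i j
  fin_cases i <;> fin_cases j <;> rfl

/-- **Twisted periodicity of `Q₀`** (from Lemma 4.1 of the paper): for `Re ν > 0` and
`ψ : (0,∞) → V` continuous satisfying the real Lewis equation, the series defining
`Q₀(x)` converges absolutely for every `x > 0` and `Q₀(x+1) = η(T') Q₀(x)`. -/
theorem QZero_twisted_periodicity [FiniteDimensional ℂ V] [Nontrivial V]
    (η : SL2Z →* (V →ₗ[ℂ] V)ˣ) (hη1 : η negI = 1) (hηfin : (Set.range η).Finite)
    (ν : ℂ) (hν : 0 < ν.re)
    (ψ : ℝ → V) (hψc : ContinuousOn ψ (Set.Ioi 0))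
    (hlewis : ∀ x : ℝ, 0 < x →
      (η Tmat : V →ₗ[ℂ] V) (ψ x) =
        ψ (x + 1) + (((x + 1 : ℝ) : ℂ) ^ (-2 * ν - 1)) •
          (η (Smat * Tmat⁻¹) : V →ₗ[ℂ] V) (ψ (x / (x + 1)))) :
    (∀ x : ℝ, 0 < x → Summable fun n : ℕ => ‖QZeroTerm ν η ψ x n‖) ∧
    (∀ x : ℝ, 0 < x →
      QZero ν η ψ (x + 1) = (η Tpmat : V →ₗ[ℂ] V) (QZero ν η ψ x)) := by
  classical
  -- a uniform bound on the operators in the (finite) image of η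
  obtain ⟨C, hC0, hC⟩ : ∃ C : ℝ, 0 ≤ C ∧
      ∀ (g : SL2Z) (v : V), ‖(η g : V →ₗ[ℂ] V) v‖ ≤ C * ‖v‖ := by
    have hne : (hηfin.toFinset).Nonempty := ⟨η 1, by simp; exact ⟨1, map_one η⟩⟩
    refine ⟨hηfin.toFinset.sup' hne
      (fun u => ‖LinearMap.toContinuousLinearMap (u : V →ₗ[ℂ] V)‖), ?_, ?_⟩
    · exact le_trans (norm_nonneg (LinearMap.toContinuousLinearMap ((η 1 : V →ₗ[ℂ] V))))
        (Finset.le_sup' (fun u : (V →ₗ[ℂ] V)ˣ =>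
          ‖LinearMap.toContinuousLinearMap (u : V →ₗ[ℂ] V)‖)
          (by simp; exact ⟨1, map_one η⟩ : η 1 ∈ hηfin.toFinset))
    · intro g v
      have hmem : η g ∈ hηfin.toFinset := by simp
      have h1 : ‖LinearMap.toContinuousLinearMap ((η g : V →ₗ[ℂ] V))‖ ≤ _ :=
        Finset.le_sup' (fun u : (V →ₗ[ℂ] V)ˣ =>
          ‖LinearMap.toContinuousLinearMap (u : V →ₗ[ℂ] V)‖) hmem
      calc ‖(η g : V →ₗ[ℂ] V) v‖
          = ‖LinearMap.toContinuousLinearMap ((η g : V →ₗ[ℂ] V)) v‖ := rfl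
        _ ≤ ‖LinearMap.toContinuousLinearMap ((η g : V →ₗ[ℂ] V))‖ * ‖v‖ :=
            ContinuousLinearMap.le_opNorm _ _
        _ ≤ _ * ‖v‖ := mul_le_mul_of_nonneg_right h1 (norm_nonneg v)
  have hre : (-2 * ν - 1).re = -2 * ν.re - 1 := by simp
  have hsum : ∀ x : ℝ, 0 < x → Summable fun n : ℕ => ‖QZeroTerm ν η ψ x n‖ := by
    intro x hx
    obtain ⟨M, hM⟩ := (isCompact_Icc : IsCompact (Set.Icc (1:ℝ) (1 + 1/x))).exists_bound_of_continuousOn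
      (hψc.mono (fun y hy => lt_of_lt_of_le one_pos hy.1))
    have hmem : ∀ n : ℕ, 1 + 1/((n:ℝ) + x) ∈ Set.Icc (1:ℝ) (1 + 1/x) := by
      intro n
      have hnx : 0 < (n:ℝ) + x := by positivity
      refine ⟨by nlinarith [one_div_pos.mpr hnx], ?_⟩
      have : 1/((n:ℝ)+x) ≤ 1/x := one_div_le_one_div_of_le hx (le_add_of_nonneg_left (Nat.cast_nonneg n))
      linarith
    refine Summable.of_nonneg_of_le (fun n => norm_nonneg _) (fun n => ?_)
      ((aux_summable_rpow ((-2*ν-1).re) x (by rw [hre]; linarith) hx).mul_right (C * M))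
    have hnx : 0 < (n:ℝ) + x := by positivity
    rw [QZeroTerm, norm_smul]
    have h1 : ‖(((n:ℝ) + x : ℝ) : ℂ) ^ (-2 * ν - 1)‖ = ((n:ℝ) + x) ^ ((-2 * ν - 1).re) := by
      exact Complex.norm_cpow_eq_rpow_re_of_pos hnx _
    rw [h1]
    refine mul_le_mul_of_nonneg_left ?_ (Real.rpow_nonneg hnx.le _)
    calc ‖(η (Tmat * Tpmat ^ n)⁻¹ : V →ₗ[ℂ] V) (ψ (1 + 1/((n:ℝ) + x)))‖
        ≤ C * ‖ψ (1 + 1/((n:ℝ) + x))‖ := hC _ _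
      _ ≤ C * M := mul_le_mul_of_nonneg_left (hM _ (hmem n)) hC0
  refine ⟨hsum, fun x hx => ?_⟩
  have hx1 : (0:ℝ) < x + 1 := by linarith
  have ha : Summable (fun n => QZeroTerm ν η ψ x n) := (hsum x hx).of_norm
  -- term-shift identity
  have hterm : ∀ n : ℕ, QZeroTerm ν η ψ (x+1) n
      = (η Tpmat : V →ₗ[ℂ] V) (QZeroTerm ν η ψ x (n+1)) := by
    intro n
    have hg : Tpmat * (Tmat * Tpmat ^ (n+1))⁻¹ = (Tmat * Tpmat ^ n)⁻¹ := by group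
    have hu : η Tpmat * η (Tmat * Tpmat ^ (n+1))⁻¹ = η (Tmat * Tpmat ^ n)⁻¹ := by
      rw [← map_mul, hg]
    have hn : ((n:ℝ) + (x+1)) = ((n+1:ℕ):ℝ) + x := by push_cast; ring
    simp only [QZeroTerm, hn, _root_.map_smul]
    congr 1
    have := congrArg (fun u : (V →ₗ[ℂ] V)ˣ =>
      (u : V →ₗ[ℂ] V) (ψ (1 + 1/(((n+1:ℕ):ℝ) + x)))) hu
    simpa only [Units.val_mul, Module.End.mul_apply] using this.symm
  -- shifting the sum
  have hsum1 : Summable (fun n => QZeroTerm ν η ψ x (n+1)) := (summable_nat_add_iff 1).mpr ha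
  have hT : ∑' n, QZeroTerm ν η ψ (x+1) n
      = (η Tpmat : V →ₗ[ℂ] V) ((∑' n, QZeroTerm ν η ψ x n) - QZeroTerm ν η ψ x 0) := by
    calc ∑' n, QZeroTerm ν η ψ (x+1) n
        = ∑' n, (η Tpmat : V →ₗ[ℂ] V) (QZeroTerm ν η ψ x (n+1)) := tsum_congr hterm
      _ = (η Tpmat : V →ₗ[ℂ] V) (∑' n, QZeroTerm ν η ψ x (n+1)) :=
          ((LinearMap.toContinuousLinearMap ((η Tpmat : V →ₗ[ℂ] V))).map_tsum hsum1).symm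
      _ = (η Tpmat : V →ₗ[ℂ] V) ((∑' n, QZeroTerm ν η ψ x n) - QZeroTerm ν η ψ x 0) := by
          congr 1
          rw [ha.tsum_eq_zero_add]
          abel
  -- the Lewis equation applied at 1/x
  have hlewis' := hlewis (1/x) (by positivity)
  have e1 : (1:ℝ)/x + 1 = 1 + 1/x := by ring
  have e2 : ((1:ℝ)/x)/((1:ℝ)/x+1) = 1/(x+1) := by
    rw [div_eq_div_iff (by positivity) (by positivity)]
    field_simp
    ring
  rw [e2, e1] at hlewis'
  have hψeq : ψ (1 + 1/x)
      = (η Tmat : V →ₗ[ℂ] V) (ψ (1/x))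
        - (((1 + 1/x : ℝ) : ℂ) ^ (-2*ν-1)) • (η (Smat * Tmat⁻¹) : V →ₗ[ℂ] V) (ψ (1/(x+1))) := by
    rw [hlewis']; abel
  have ha0 : QZeroTerm ν η ψ x 0
      = (((x : ℝ) : ℂ) ^ (-2*ν-1)) • (η Tmat⁻¹ : V →ₗ[ℂ] V) (ψ (1 + 1/x)) := by
    simp [QZeroTerm]
  -- boundary identity
  have k1 : ∀ v : V, (η Tpmat : V →ₗ[ℂ] V) ((η Tmat⁻¹ : V →ₗ[ℂ] V)
      ((η Tmat : V →ₗ[ℂ] V) v)) = (η Tpmat : V →ₗ[ℂ] V) v := by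
    intro v
    have hu : η Tpmat * η Tmat⁻¹ * η Tmat = η Tpmat := by
      rw [← map_mul, ← map_mul]
      congr 1
      group
    have := congrArg (fun u : (V →ₗ[ℂ] V)ˣ => (u : V →ₗ[ℂ] V) v) hu
    simpa only [Units.val_mul, Module.End.mul_apply] using this
  have k2 : ∀ v : V, (η Tpmat : V →ₗ[ℂ] V) ((η Tmat⁻¹ : V →ₗ[ℂ] V)
      ((η (Smat * Tmat⁻¹) : V →ₗ[ℂ] V) v)) = v := by
    intro v
    have hu : η Tpmat * η Tmat⁻¹ * η (Smat * Tmat⁻¹) = 1 := by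
      rw [← map_mul, ← map_mul, Tpmat_Tmat_inv_Smat_Tmat_inv, map_one]
    have := congrArg (fun u : (V →ₗ[ℂ] V)ˣ => (u : V →ₗ[ℂ] V) v) hu
    simpa only [Units.val_mul, Module.End.mul_apply, Units.val_one,
      Module.End.one_apply] using this
  have hmul : (((x+1:ℝ)) : ℂ) ^ (-2*ν-1)
      = ((x:ℝ) : ℂ) ^ (-2*ν-1) * ((1 + 1/x : ℝ) : ℂ) ^ (-2*ν-1) := by
    rw [← Complex.mul_cpow_ofReal_nonneg hx.le (by positivity)]
    congr 1
    have hx0 : (x:ℂ) ≠ 0 := Complex.ofReal_ne_zero.mpr hx.ne'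
    push_cast
    field_simp
  have hb : (((x+1:ℝ)) : ℂ) ^ (-2*ν-1) • ψ (1/(x+1))
      = ((x:ℝ) : ℂ) ^ (-2*ν-1) • (η Tpmat : V →ₗ[ℂ] V) (ψ (1/x))
        - (η Tpmat : V →ₗ[ℂ] V) (QZeroTerm ν η ψ x 0) := by
    rw [ha0, _root_.map_smul, hψeq, map_sub, map_sub, _root_.map_smul, _root_.map_smul,
      k1 (ψ (1/x)), k2 (ψ (1/(x+1))), hmul, mul_smul, smul_sub]
    abel
  -- final assembly
  show (((x+1:ℝ)) : ℂ) ^ (-2*ν-1) • ψ (1/(x+1)) - ∑' n, QZeroTerm ν η ψ (x+1) n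
      = (η Tpmat : V →ₗ[ℂ] V) ((((x:ℝ)) : ℂ) ^ (-2*ν-1) • ψ (1/x) - ∑' n, QZeroTerm ν η ψ x n)
  rw [hT, hb, map_sub, map_sub, _root_.map_smul]
  abel

end
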